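/- arXiv:2012.15434 — 2 statements merged into one kernel-verified Lean document; each statement's English description precedes it below -/
import Mathlib

section
/- The number of monic square-free polynomials of degree n ≥ 2 over 𝔽_q equals q^n - q^{n-1}. -/
open Polynomial Finset

variable {k : Type} [Field k] [Fintype k]

namespace SF5

/-- Monic polynomials of degree `n`. -/
abbrev M (k : Type) [Field k] (n : ℕ) := { f : Polynomial k // f.Monic ∧ f.natDegree = n }

/-- Squarefree monic polynomials of degree `n`. -/
abbrev S (k : Type) [Field k] (n : ℕ) :=
  { f : Polynomial k // f.Monic ∧ f.natDegree = n ∧ Squarefree f }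

noncomputable def mEquiv (n : ℕ) : M k n ≃ (Fin n → k) :=
  (monicEquivDegreeLT n).trans (degreeLTEquiv k n).toEquiv

instance (n : ℕ) : Finite (M k n) := Finite.of_equiv _ (mEquiv n).symm

instance (n : ℕ) : Finite (S k n) :=
  Finite.of_injective (fun f => (⟨f.1, f.2.1, f.2.2.1⟩ : M k n))
    (by intro a b h; exact Subtype.ext (by simpa [Subtype.ext_iff] using h))

lemma card_M (n : ℕ) : Nat.card (M k n) = Fintype.card k ^ n := by
  rw [Nat.card_congr (mEquiv n), Nat.card_eq_fintype_card]
  classical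
  simp [Fintype.card_fun]

/-- Uniqueness of the square part. -/
lemma assoc_of_eq : ∀ (n : ℕ) (g₁ g₂ h₁ h₂ : Polynomial k), h₁.natDegree = n →
    Squarefree g₁ → Squarefree g₂ → h₁ ≠ 0 → h₂ ≠ 0 →
    g₁ * h₁ ^ 2 = g₂ * h₂ ^ 2 → Associated h₁ h₂ := by
  intro n
  induction n using Nat.strong_induction_on with
  | _ n ih =>
    intro g₁ g₂ h₁ h₂ hdeg hg₁ hg₂ h₁0 h₂0 heq
    by_cases hu : IsUnit h₁
    · -- then h₂ is a unit too
      have hu₂ : IsUnit h₂ := by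
        by_contra hu₂
        obtain ⟨p, hp, hpd⟩ := WfDvdMonoid.exists_irreducible_factor hu₂ h₂0
        have hdvd : p * p ∣ g₁ * h₁ ^ 2 := by
          rw [heq]
          exact Dvd.dvd.mul_left (by rw [sq]; exact mul_dvd_mul hpd hpd) g₂
        have : p * p ∣ g₁ := (IsUnit.dvd_mul_right (hu.pow 2)).mp hdvd
        exact hp.not_isUnit (hg₁ p this)
      exact (associated_one_iff_isUnit.mpr hu).trans
        (associated_one_iff_isUnit.mpr hu₂).symm
    · obtain ⟨p, hp, hpd⟩ := WfDvdMonoid.exists_irreducible_factor hu h₁0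
      have hpp : Prime p := hp.prime
      have hpd₂ : p ∣ h₂ := by
        have h2 : p ^ 2 ∣ g₂ * h₂ ^ 2 := by
          rw [← heq, sq]
          exact Dvd.dvd.mul_left (by rw [sq]; exact mul_dvd_mul hpd hpd) g₁
        have := Squarefree.pow_dvd_of_squarefree_of_pow_succ_dvd_mul_right
          (k := 1) hg₂ hpp h2
        rw [pow_one] at this
        exact hpp.dvd_of_dvd_pow this
      obtain ⟨a, rfl⟩ := hpd
      obtain ⟨b, rfl⟩ := hpd₂
      have hp0 : p ≠ 0 := hpp.ne_zero
      have ha0 : a ≠ 0 := fun h => h₁0 (by simp [h])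
      have hb0 : b ≠ 0 := fun h => h₂0 (by simp [h])
      have heq' : g₁ * a ^ 2 = g₂ * b ^ 2 := by
        have : p ^ 2 * (g₁ * a ^ 2) = p ^ 2 * (g₂ * b ^ 2) := by ring_nf; ring_nf at heq; linear_combination heq
        exact mul_left_cancel₀ (pow_ne_zero 2 hp0) this
      have hdeglt : a.natDegree < n := by
        have h1 : (p * a).natDegree = p.natDegree + a.natDegree :=
          natDegree_mul hp0 ha0
        have hp1 : p.natDegree ≠ 0 := by
          intro h0
          apply hp.not_isUnit
          have hcq := eq_C_of_natDegree_eq_zero h0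
          rw [hcq]
          refine isUnit_C.mpr (isUnit_iff_ne_zero.mpr ?_)
          intro hc
          exact hp0 (by rw [hcq, hc, map_zero])
        omega
      exact Associated.mul_left p (ih a.natDegree hdeglt g₁ g₂ a b rfl hg₁ hg₂ ha0 hb0 heq')


/-- Existence of the decomposition `f = g * h^2`. -/
lemma exists_decomp : ∀ (n : ℕ) (f : Polynomial k), f.Monic → f.natDegree = n →
    ∃ g h : Polynomial k, g.Monic ∧ Squarefree g ∧ h.Monic ∧ f = g * h ^ 2 := by
  classical
  intro n
  induction n using Nat.strong_induction_on with
  | _ n ih =>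
    intro f hf hdeg
    by_cases hsq : Squarefree f
    · exact ⟨f, 1, hf, hsq, monic_one, by ring⟩
    · rw [Squarefree] at hsq
      push_neg at hsq
      obtain ⟨p, hpd, hpu⟩ := hsq
      have hp0 : p ≠ 0 := by
        rintro rfl
        simp only [mul_zero, zero_dvd_iff] at hpd
        exact hf.ne_zero hpd
      obtain ⟨q, hq, hqd⟩ := WfDvdMonoid.exists_irreducible_factor hpu hp0
      set q' := normalize q with hq'
      have hq'm : q'.Monic := monic_normalize hq.ne_zero
      have hq'i : Irreducible q' := (associated_normalize q).irreducible hq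
      have hq'd : q' ^ 2 ∣ f := by
        have h1 : q' ∣ p := (normalize_dvd_iff).mpr hqd
        calc q' ^ 2 ∣ p * p := by rw [sq]; exact mul_dvd_mul h1 h1
        _ ∣ f := hpd
      obtain ⟨f', rfl⟩ := hq'd
      have hf'm : f'.Monic := Monic.of_mul_monic_left (hq'm.pow 2) hf
      have hq'0 : q' ≠ 0 := hq'm.ne_zero
      have hf'0 : f' ≠ 0 := hf'm.ne_zero
      have hq'deg : q'.natDegree ≠ 0 := by
        intro h0
        exact hq'i.not_isUnit (hq'm.natDegree_eq_zero.mp h0 ▸ isUnit_one)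
      have hlt : f'.natDegree < n := by
        have hmul : (q' ^ 2 * f').natDegree = (q' ^ 2).natDegree + f'.natDegree :=
          natDegree_mul (pow_ne_zero 2 hq'0) hf'0
        have hpow : (q' ^ 2).natDegree = 2 * q'.natDegree := natDegree_pow q' 2
        omega
      obtain ⟨g, h, hgm, hgsq, hhm, hfe⟩ := ih f'.natDegree hlt f' hf'm rfl
      exact ⟨g, q' * h, hgm, hgsq, hq'm.mul hhm, by rw [hfe]; ring⟩

/-- number of squarefree monics of degree n -/
noncomputable def c (k : Type) [Field k] [Fintype k] (n : ℕ) : ℕ := Nat.card (S k n)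

noncomputable def psi (n : ℕ) :
    (Σ d : Fin (n / 2 + 1), S k (n - 2 * d) × M k d) → M k n := fun x =>
  ⟨x.2.1.1 * x.2.2.1 ^ 2, by
    obtain ⟨⟨d, hd⟩, ⟨g, hgm, hgd, hgs⟩, ⟨h, hhm, hhd⟩⟩ := x
    refine ⟨hgm.mul (hhm.pow 2), ?_⟩
    have h2d : 2 * d ≤ n := by omega
    rw [natDegree_mul hgm.ne_zero (pow_ne_zero 2 hhm.ne_zero), natDegree_pow, hgd, hhd]
    omega⟩

lemma psi_bij (n : ℕ) : Function.Bijective (psi (k := k) n) := by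
  constructor
  · rintro ⟨⟨d₁, hd₁⟩, ⟨g₁, hg₁m, hg₁d, hg₁s⟩, ⟨h₁, hh₁m, hh₁d⟩⟩
      ⟨⟨d₂, hd₂⟩, ⟨g₂, hg₂m, hg₂d, hg₂s⟩, ⟨h₂, hh₂m, hh₂d⟩⟩ heq
    have heq' : g₁ * h₁ ^ 2 = g₂ * h₂ ^ 2 := congrArg Subtype.val heq
    have hassoc : Associated h₁ h₂ :=
      assoc_of_eq h₁.natDegree g₁ g₂ h₁ h₂ rfl hg₁s hg₂s hh₁m.ne_zero hh₂m.ne_zero heq'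
    have hh : h₁ = h₂ := eq_of_monic_of_associated hh₁m hh₂m hassoc
    subst hh
    have hg : g₁ = g₂ := mul_right_cancel₀ (pow_ne_zero 2 hh₁m.ne_zero) heq'
    subst hg
    have hd : d₁ = d₂ := by simp only [Fin.val_mk] at hh₁d hh₂d; omega
    subst hd
    rfl
  · rintro ⟨f, hfm, hfd⟩
    obtain ⟨g, h, hgm, hgs, hhm, hfe⟩ := exists_decomp n f hfm hfd
    have hdeg : n = g.natDegree + 2 * h.natDegree := by
      rw [← hfd, hfe, natDegree_mul hgm.ne_zero (pow_ne_zero 2 hhm.ne_zero), natDegree_pow]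
    refine ⟨⟨⟨h.natDegree, by omega⟩, ⟨g, hgm, by simp only [Fin.val_mk]; omega, hgs⟩,
      ⟨h, hhm, by simp only [Fin.val_mk]⟩⟩, ?_⟩
    exact Subtype.ext hfe.symm

lemma nat_card_sigma {ι : Type} [Fintype ι] (β : ι → Type) [∀ i, Finite (β i)] :
    Nat.card (Σ i, β i) = ∑ i, Nat.card (β i) := by
  classical
  letI : ∀ i, Fintype (β i) := fun i => Fintype.ofFinite _
  simp [Nat.card_eq_fintype_card, Fintype.card_sigma]

lemma key_identity (n : ℕ) :
    Fintype.card k ^ n = ∑ d ∈ Finset.range (n / 2 + 1), c k (n - 2 * d) * Fintype.card k ^ d := by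
  classical
  have h1 := Nat.card_congr (Equiv.ofBijective _ (psi_bij (k := k) n))
  rw [card_M] at h1
  rw [← h1, nat_card_sigma]
  rw [Fin.sum_univ_eq_sum_range (fun d => Nat.card (S k (n - 2 * d) × M k d))]
  refine Finset.sum_congr rfl fun d _ => ?_
  rw [Nat.card_prod, card_M, c]

end SF5

/-- The number of monic squarefree polynomials of degree `n ≥ 2` over `𝔽_q`
equals `q^n - q^(n-1)`. -/
theorem stmt_5 (k : Type) [Field k] [Fintype k] (n : ℕ) (hn : 2 ≤ n) :
    Nat.card { f : Polynomial k // f.Monic ∧ f.natDegree = n ∧ Squarefree f } =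
      Fintype.card k ^ n - Fintype.card k ^ (n - 1) := by
  have hc : Nat.card { f : Polynomial k // f.Monic ∧ f.natDegree = n ∧ Squarefree f }
      = SF5.c k n := rfl
  rw [hc]
  have h1 := SF5.key_identity (k := k) n
  have h2 := SF5.key_identity (k := k) (n - 2)
  rw [Finset.sum_range_succ'] at h1
  have hs : ∑ d ∈ Finset.range (n / 2), SF5.c k (n - 2 * (d + 1)) * Fintype.card k ^ (d + 1)
      = (∑ d ∈ Finset.range ((n - 2) / 2 + 1), SF5.c k ((n - 2) - 2 * d) * Fintype.card k ^ d) * Fintype.card k := by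
    rw [Finset.sum_mul]
    have hr : (n - 2) / 2 + 1 = n / 2 := by omega
    rw [hr]
    refine Finset.sum_congr rfl fun d _ => ?_
    have he : n - 2 * (d + 1) = (n - 2) - 2 * d := by omega
    rw [he, pow_succ]; ring
  rw [hs, ← h2] at h1
  have hpow : Fintype.card k ^ (n - 2) * (Fintype.card k) = Fintype.card k ^ (n - 1) := by
    rw [← pow_succ]
    congr 1
    omega
  have hle : Fintype.card k ^ (n - 1) ≤ Fintype.card k ^ n := Nat.pow_le_pow_right Fintype.card_pos (by omega)
  rw [hpow] at h1
  simp only [Nat.mul_zero, Nat.sub_zero, pow_zero, mul_one] at h1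
  omega
end

section
/- Let A be a central hyperplane arrangement in a vector space of dimension d over 𝔽_q with intersection poset L_A ordered by reverse inclusion, with minimum element 0̂ the ambient space. Then the number of 𝔽_q-points of the complement X of the arrangement equals ∑_{y ∈ L_A} μ(0̂, y) q^{d − rk(y)}, where μ is the Möbius function of L_A and rk(y) is the codimension of y. -/
open Finset
open scoped Classical

/-- Whitney/Möbius counting for a central hyperplane arrangement `A` in `𝔽_q^d`:
letting `L` be the intersection poset of `A` (intersections of subcollections,
ordered by reverse inclusion, with minimum the ambient space `⊤`) and `μ y` the
Möbius function values `μ(0̂, y)` (characterized by the usual recursion), the number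
of points of the complement of the arrangement is
`∑_{y ∈ L} μ(0̂,y) q^{d - rk y}`, where `rk y = d - dim y` is the codimension. -/
theorem stmt_6 (k : Type) [Field k] [Fintype k] (d : ℕ)
    (A : Finset (Submodule k (Fin d → k)))
    (hA : ∀ H ∈ A, Module.finrank k H = d - 1 ∧ H ≠ ⊤)
    (L : Finset (Submodule k (Fin d → k)))
    (hL : ∀ W, W ∈ L ↔ ∃ s ∈ A.powerset, W = s.inf id)
    (μ : Submodule k (Fin d → k) → ℤ)
    (hμ : ∀ y ∈ L, ∑ z ∈ L.filter (fun z => y ≤ z), μ z = if y = ⊤ then 1 else 0) :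
    (Nat.card { v : Fin d → k // ∀ H ∈ A, v ∉ H } : ℤ) =
      ∑ y ∈ L, μ y * (Fintype.card k : ℤ) ^ (d - (d - Module.finrank k y)) := by
  -- exponent simplification: for y ∈ L, finrank y ≤ d
  have hrank : ∀ y : Submodule k (Fin d → k), d - (d - Module.finrank k y) = Module.finrank k y := by
    intro y
    have h1 : Module.finrank k y ≤ d := by
      have := Submodule.finrank_le y
      rwa [Module.finrank_fin_fun] at this
    omega
  have hcard : ∀ y : Submodule k (Fin d → k),
      ((Fintype.card k : ℤ)) ^ (Module.finrank k y) = (univ.filter (fun v : Fin d → k => v ∈ y)).card := by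
    intro y
    have : Fintype.card y = Fintype.card k ^ Module.finrank k y := Module.card_eq_pow_finrank
    have h2 : (univ.filter (fun v : Fin d → k => v ∈ y)).card = Fintype.card y := by
      rw [Fintype.card_subtype]
    rw [h2, this]
    push_cast
    ring
  -- rewrite RHS
  calc (Nat.card { v : Fin d → k // ∀ H ∈ A, v ∉ H } : ℤ)
      = ∑ v : Fin d → k, (if ∀ H ∈ A, v ∉ H then (1 : ℤ) else 0) := by
        rw [Nat.card_eq_fintype_card, Fintype.card_subtype, Finset.sum_boole]
    _ = ∑ v : Fin d → k, ∑ y ∈ L.filter (fun y => v ∈ y), μ y := by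
        refine Finset.sum_congr rfl fun v _ => ?_
        -- the key step: Möbius recursion at w := inf of hyperplanes through v
        set w : Submodule k (Fin d → k) := (A.filter (fun H => v ∈ H)).inf id with hw
        have hwL : w ∈ L := (hL w).2 ⟨A.filter (fun H => v ∈ H),
          Finset.mem_powerset.2 (Finset.filter_subset _ _), rfl⟩
        have hvw : v ∈ w := by
          rw [hw]
          refine Submodule.mem_finsetInf.2 fun H hH => ?_
          exact (Finset.mem_filter.1 hH).2
        have hfilter : L.filter (fun y => v ∈ y) = L.filter (fun z => w ≤ z) := by
          refine Finset.filter_congr fun y hy => ?_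
          constructor
          · intro hvy
            obtain ⟨s, hs, rfl⟩ := (hL y).1 hy
            refine Finset.inf_mono fun H hH => Finset.mem_filter.2 ⟨Finset.mem_powerset.1 hs hH, ?_⟩
            exact Submodule.mem_finsetInf.1 hvy H hH
          · intro hle; exact hle hvw
        have htop : (w = ⊤) ↔ (∀ H ∈ A, v ∉ H) := by
          constructor
          · intro ht H hHA hvH
            have hHf : H ∈ A.filter (fun H => v ∈ H) := Finset.mem_filter.2 ⟨hHA, hvH⟩
            have : w ≤ H := Finset.inf_le hHf
            rw [ht] at this
            exact (hA H hHA).2 (top_le_iff.1 this)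
          · intro hnone
            have : A.filter (fun H => v ∈ H) = ∅ := by
              refine Finset.filter_eq_empty_iff.2 fun H hH => hnone H hH
            rw [hw, this, Finset.inf_empty]
        rw [hfilter, hμ w hwL]
        simp [htop]
    _ = ∑ y ∈ L, ∑ v ∈ univ.filter (fun v : Fin d → k => v ∈ y), μ y := by
        simp only [Finset.sum_filter]
        rw [Finset.sum_comm]
    _ = ∑ y ∈ L, μ y * (Fintype.card k : ℤ) ^ (d - (d - Module.finrank k y)) := by
        refine Finset.sum_congr rfl fun y _ => ?_
        rw [Finset.sum_const, hrank, hcard]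
        ring
end
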